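/- arXiv:2111.11283 — 2 statements merged into one kernel-verified Lean document; each statement's English description precedes it below -/
import Mathlib

section
/- If t(λ) is a nonnegative trigonometric polynomial on [-π, π], not identically zero, then G(t^α) > 0 for every α ∈ ℝ, i.e., ln t ∈ L¹([-π, π]). -/
open MeasureTheory Real Set

lemma II_log {b : ℝ} (hb : 0 ≤ b) : IntervalIntegrable Real.log volume 0 b := by
  have hmeas : AEStronglyMeasurable Real.log (volume.restrict (Ioc 0 b)) :=
    Real.measurable_log.aestronglyMeasurable
  have hg : IntervalIntegrable (fun x : ℝ => 2 * x ^ (-(1/2) : ℝ) + x) volume 0 b :=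
    ((intervalIntegral.intervalIntegrable_rpow' (by norm_num)).const_mul 2).add
      (continuous_id.intervalIntegrable _ _)
  rw [intervalIntegrable_iff_integrableOn_Ioc_of_le hb] at hg ⊢
  refine hg.mono' hmeas ?_
  filter_upwards [ae_restrict_mem measurableSet_Ioc] with x hx
  have hx0 : 0 < x := hx.1
  have h1 : ‖Real.log x‖ ≤ 2 * x ^ (-(1/2) : ℝ) + x := by
    rw [Real.norm_eq_abs]
    rcases le_or_gt 1 x with h | h
    · have : |Real.log x| = Real.log x := abs_of_nonneg (Real.log_nonneg h)
      rw [this]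
      have : Real.log x ≤ x := (Real.log_le_sub_one_of_pos hx0).trans (by linarith)
      have h2 : 0 ≤ 2 * x ^ (-(1/2) : ℝ) := by positivity
      linarith
    · have hlx : Real.log x ≤ 0 := Real.log_nonpos hx0.le h.le
      rw [abs_of_nonpos hlx]
      have key : -Real.log x = 2 * Real.log (x ^ (-(1/2):ℝ)) := by
        rw [Real.log_rpow hx0]; ring
      have h3 : Real.log (x ^ (-(1/2):ℝ)) ≤ x ^ (-(1/2):ℝ) :=
        (Real.log_le_sub_one_of_pos (by positivity)).trans (by linarith)
      nlinarith [hx0.le]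

  exact h1

lemma II_logsin : IntervalIntegrable (fun x => Real.log (Real.sin x)) volume (-π) π := by
  have h0pi : IntervalIntegrable (fun x => Real.log (Real.sin x)) volume 0 π := by
    have hmeas : AEStronglyMeasurable (fun x => Real.log (Real.sin x))
        (volume.restrict (Ioc 0 π)) :=
      (Real.measurable_log.comp Real.continuous_sin.measurable).aestronglyMeasurable
    have hlogpi : IntervalIntegrable Real.log volume 0 π := II_log pi_pos.le
    have h2 : IntervalIntegrable (fun x => Real.log (π - x)) volume 0 π := by
      have := (II_log pi_pos.le).comp_sub_left π
      simpa using this.symm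
    have hg : IntervalIntegrable (fun x : ℝ => 2 * Real.log π - Real.log x - Real.log (π - x))
        volume 0 π :=
      ((intervalIntegrable_const).sub hlogpi).sub h2
    rw [intervalIntegrable_iff_integrableOn_Ioc_of_le pi_pos.le] at hg ⊢
    refine hg.mono' hmeas ?_
    filter_upwards [ae_restrict_mem measurableSet_Ioc] with x hx
    rcases eq_or_lt_of_le hx.2 with rfl | hxpi
    · simp [Real.sin_pi]
      have h1 : (1:ℝ) ≤ π := by linarith [Real.pi_gt_three]
      have := Real.log_nonneg h1
      linarith
    · have hx0 : 0 < x := hx.1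
      have hsinpos : 0 < Real.sin x := Real.sin_pos_of_pos_of_lt_pi hx0 hxpi
      have hkey : x * (π - x) / π ^ 2 ≤ Real.sin x := by
        have hπ : (0:ℝ) < π := pi_pos
        rw [div_le_iff₀ (by positivity)]
        rcases le_or_gt x (π/2) with h | h
        · have h1 : 2 / π * x ≤ Real.sin x := Real.mul_le_sin hx0.le h
          have h1' : 2 * x ≤ Real.sin x * π := by
            have := mul_le_mul_of_nonneg_right h1 hπ.le
            field_simp at this; linarith
          nlinarith [mul_le_mul_of_nonneg_right h1' hπ.le]
        · have h1 : 2 / π * (π - x) ≤ Real.sin (π - x) :=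
            Real.mul_le_sin (by linarith) (by linarith)
          rw [Real.sin_pi_sub] at h1
          have h1' : 2 * (π - x) ≤ Real.sin x * π := by
            have := mul_le_mul_of_nonneg_right h1 hπ.le
            field_simp at this; linarith
          nlinarith [mul_le_mul_of_nonneg_right h1' hπ.le]
      have hls : Real.log (Real.sin x) ≤ 0 :=
        Real.log_nonpos hsinpos.le (Real.sin_le_one x)
      rw [Real.norm_eq_abs, abs_of_nonpos hls]
      have hpx : (0:ℝ) < π - x := by linarith
      have hlb : Real.log (x * (π - x) / π ^ 2) ≤ Real.log (Real.sin x) :=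
        Real.log_le_log (by positivity) hkey
      have hexp : Real.log (x * (π - x) / π ^ 2) =
          Real.log x + Real.log (π - x) - 2 * Real.log π := by
        rw [Real.log_div (by positivity) (by positivity),
          Real.log_mul hx0.ne' hpx.ne',
          Real.log_pow]
        push_cast; ring
      linarith
  have hneg : IntervalIntegrable (fun x => Real.log (Real.sin x)) volume (-π) 0 := by
    have := (IntervalIntegrable.iff_comp_neg enorm_ne_top).mp h0pi.symm
    simp only [Real.sin_neg, Real.log_neg_eq_log, neg_zero] at this
    exact this
  exact hneg.trans h0pi

lemma II_logsin_affine {θ : ℝ} (h1 : -π ≤ θ) (h2 : θ ≤ π) :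
    IntervalIntegrable (fun x => Real.log (Real.sin ((x - θ)/2))) volume (-π) π := by
  have hsub : IntervalIntegrable (fun u => Real.log (Real.sin u)) volume ((-π-θ)/2) ((π-θ)/2) := by
    apply II_logsin.mono_set
    apply Set.uIcc_subset_uIcc <;> rw [Set.mem_uIcc] <;> left <;> constructor <;> linarith
  have hk := hsub.comp_mul_right (c := 1/2) enorm_ne_top enorm_ne_top
  rw [show (((-π-θ)/2)/(1/2) : ℝ) = -π-θ by ring,
      show (((π-θ)/2)/(1/2) : ℝ) = π-θ by ring] at hk
  have hfin := hk.comp_sub_right θ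
  rw [show (-π-θ+θ : ℝ) = -π by ring, show (π-θ+θ : ℝ) = π by ring] at hfin
  simpa [mul_one_div, div_eq_mul_inv] using hfin

lemma abs_exp_sub_exp (x θ : ℝ) :
    ‖Complex.exp (Complex.I * x) - Complex.exp ((θ:ℂ) * Complex.I)‖ =
    2 * |Real.sin ((x - θ)/2)| := by
  have key : Complex.exp (Complex.I * x) - Complex.exp ((θ:ℂ) * Complex.I)
      = Complex.exp (Complex.I * (((x + θ)/2 : ℝ) : ℂ)) *
        (2 * Complex.I * Complex.sin ((((x - θ)/2 : ℝ) : ℂ))) := by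
    have hs : (2 : ℂ) * Complex.I * Complex.sin ((((x - θ)/2 : ℝ) : ℂ))
        = Complex.exp ((((x - θ)/2 : ℝ) : ℂ) * Complex.I)
          - Complex.exp (-((((x - θ)/2 : ℝ) : ℂ)) * Complex.I) := by
      rw [Complex.sin]
      have hI := Complex.I_mul_I
      field_simp
      ring_nf
      rw [mul_comm]
      ring_nf
      rw [show ((Complex.I)^2 : ℂ) = -1 from Complex.I_sq]
      ring
    rw [hs, mul_sub, ← Complex.exp_add, ← Complex.exp_add]
    congr 2 <;> push_cast <;> ring
  rw [key, norm_mul]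
  have h1 : ‖Complex.exp (Complex.I * (((x + θ)/2 : ℝ) : ℂ))‖ = 1 := by
    rw [mul_comm]; exact Complex.norm_exp_ofReal_mul_I _
  rw [h1, one_mul, ← Complex.ofReal_sin, norm_mul, norm_mul, Complex.norm_I,
    Complex.norm_real, Real.norm_eq_abs, Complex.norm_two]
  ring

lemma II_log_abs_exp_sub (r : ℂ) :
    IntervalIntegrable (fun x : ℝ => Real.log (‖Complex.exp (Complex.I * x) - r‖))
      volume (-π) π := by
  have hcontsub : Continuous fun x : ℝ => Complex.exp (Complex.I * x) - r :=
    (Complex.continuous_exp.comp (continuous_const.mul Complex.continuous_ofReal)).sub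
      continuous_const
  by_cases habs : ‖r‖ = 1
  · set θ := r.arg with hθdef
    have hr : Complex.exp ((θ:ℂ) * Complex.I) = r := by
      have := Complex.norm_mul_exp_arg_mul_I r
      rwa [habs, Complex.ofReal_one, one_mul] at this
    have hid : ∀ x : ℝ, ‖Complex.exp (Complex.I * x) - r‖
        = 2 * |Real.sin ((x - θ)/2)| := by
      intro x; rw [← hr]; exact abs_exp_sub_exp x θ
    have hθ1 : -π ≤ θ := by
      have := Complex.neg_pi_lt_arg r; linarith
    have hθ2 : θ ≤ π := Complex.arg_le_pi r
    have hgint : IntervalIntegrable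
        (fun x : ℝ => Real.log 2 + ‖Real.log (Real.sin ((x - θ)/2))‖) volume (-π) π :=
      intervalIntegrable_const.add (II_logsin_affine hθ1 hθ2).norm
    have hmeas : AEStronglyMeasurable
        (fun x : ℝ => Real.log (‖Complex.exp (Complex.I * x) - r‖))
        (volume.restrict (Ioc (-π) π)) :=
      (Real.measurable_log.comp (continuous_norm.comp hcontsub).measurable)
        |>.aestronglyMeasurable
    have hpi : -π ≤ π := by linarith [pi_pos]
    rw [intervalIntegrable_iff_integrableOn_Ioc_of_le hpi] at hgint ⊢
    refine hgint.mono' hmeas (ae_of_all _ fun x => ?_)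
    rw [hid x]
    by_cases hs : Real.sin ((x - θ)/2) = 0
    · rw [hs]
      simp only [abs_zero, mul_zero, Real.log_zero, norm_zero]
      positivity
    · have habs0 : |Real.sin ((x - θ)/2)| ≠ 0 := abs_ne_zero.mpr hs
      rw [Real.log_mul two_ne_zero habs0, Real.log_abs]
      calc ‖Real.log 2 + Real.log (Real.sin ((x - θ)/2))‖
          ≤ ‖Real.log 2‖ + ‖Real.log (Real.sin ((x - θ)/2))‖ := norm_add_le _ _
        _ = Real.log 2 + ‖Real.log (Real.sin ((x - θ)/2))‖ := by
            rw [Real.norm_eq_abs, abs_of_nonneg (Real.log_nonneg one_le_two)]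
  · have hne : ∀ x : ℝ, Complex.exp (Complex.I * x) - r ≠ 0 := by
      intro x h
      apply habs
      rw [← sub_eq_zero.mp h, mul_comm, Complex.norm_exp_ofReal_mul_I]
    have hcont : Continuous fun x : ℝ =>
        Real.log (‖Complex.exp (Complex.I * x) - r‖) := by
      apply Continuous.log ((continuous_norm.comp hcontsub))
      exact fun x => norm_ne_zero_iff.mpr (hne x)
    exact hcont.intervalIntegrable _ _

lemma log_multiset_prod (s : Multiset ℝ) (h : ∀ a ∈ s, a ≠ 0) :
    Real.log s.prod = (s.map Real.log).sum := by
  induction s using Multiset.induction_on with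
  | empty => simp
  | cons a s ih =>
    rw [Multiset.prod_cons, Multiset.map_cons, Multiset.sum_cons,
      Real.log_mul (h a (Multiset.mem_cons_self a s))
        (Multiset.prod_ne_zero fun h0 => h 0 (Multiset.mem_cons_of_mem h0) rfl),
      ih fun b hb => h b (Multiset.mem_cons_of_mem hb)]

lemma II_sum_multiset (s : Multiset ℂ) :
    IntervalIntegrable (fun x : ℝ =>
      ((s.map (fun a => Real.log (‖Complex.exp (Complex.I * x) - a‖))).sum))
      volume (-π) π := by
  induction s using Multiset.induction_on with
  | empty => simp
  | cons a s ih =>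
    simp only [Multiset.map_cons, Multiset.sum_cons]
    exact (II_log_abs_exp_sub a).add ih

lemma countable_exp_fiber (r : ℂ) :
    Set.Countable {x : ℝ | Complex.exp (Complex.I * x) = r} := by
  set S := {x : ℝ | Complex.exp (Complex.I * x) = r} with hS
  rcases S.eq_empty_or_nonempty with h | ⟨x₀, hx₀⟩
  · rw [h]; exact Set.countable_empty
  · refine (Set.countable_range (fun n : ℤ => x₀ + n * (2 * π))).mono ?_
    intro x hx
    have hx0' : Complex.exp (Complex.I * x) = Complex.exp (Complex.I * x₀) := by
      rw [hx₀]; exact hx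
    obtain ⟨n, hn⟩ := Complex.exp_eq_exp_iff_exists_int.mp hx0'
    refine ⟨n, ?_⟩
    have h2 : (Complex.I) * ((x : ℂ) - (x₀ : ℂ) - n * (2 * π)) = 0 := by
      linear_combination hn
    rcases mul_eq_zero.mp h2 with h3 | h3
    · exact absurd h3 Complex.I_ne_zero
    · have h4 : (x : ℂ) = ((x₀ + n * (2 * π) : ℝ) : ℂ) := by
        push_cast
        linear_combination h3
      have h5 := Complex.ofReal_inj.mp h4
      show x₀ + (n:ℝ) * (2*π) = x
      linarith

theorem log_trig_poly_integrable (t : ℝ → ℝ) (N : ℕ) (c : ℤ → ℂ)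
    (ht : ∀ x : ℝ, (t x : ℂ) =
      ∑ k ∈ Finset.Icc (-(N : ℤ)) (N : ℤ), c k * Complex.exp (Complex.I * k * x))
    (hpos : ∀ x : ℝ, 0 ≤ t x) (hne : ∃ x : ℝ, t x ≠ 0) :
    IntegrableOn (fun x => Real.log (t x)) (Icc (-π) π) ∧
    ∀ α : ℝ,
      0 < Real.exp ((2 * π)⁻¹ * ∫ x in Icc (-π) π, Real.log (t x ^ α)) := by
  refine ⟨?_, fun α => Real.exp_pos _⟩
  set P : Polynomial ℂ :=
    ∑ k ∈ Finset.Icc (-(N : ℤ)) (N : ℤ), Polynomial.C (c k) * Polynomial.X ^ (k + N).toNat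
    with hPdef
  have heval : ∀ x : ℝ, P.eval (Complex.exp (Complex.I * x))
      = (t x : ℂ) * Complex.exp (Complex.I * N * x) := by
    intro x
    rw [hPdef, Polynomial.eval_finset_sum, ht x, Finset.sum_mul]
    refine Finset.sum_congr rfl fun k hk => ?_
    have hk' : 0 ≤ k + (N : ℤ) := by
      have := (Finset.mem_Icc.mp hk).1; linarith
    rw [Polynomial.eval_mul, Polynomial.eval_C, Polynomial.eval_pow, Polynomial.eval_X,
      ← Complex.exp_nat_mul]
    rw [mul_assoc, ← Complex.exp_add]
    congr 2
    have : ((k + (N : ℤ)).toNat : ℂ) = (k : ℂ) + (N : ℂ) := by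
      have h1 : (((k + (N : ℤ)).toNat : ℤ) : ℂ) = ((k + (N : ℤ) : ℤ) : ℂ) := by
        rw [Int.toNat_of_nonneg hk']
      push_cast at h1 ⊢
      linear_combination h1
    rw [this]
    ring
  have habs_eval : ∀ x : ℝ, ‖P.eval (Complex.exp (Complex.I * x))‖ = t x := by
    intro x
    rw [heval x, norm_mul, Complex.norm_exp]
    simp [abs_of_nonneg (hpos x)]
  have hP0 : P ≠ 0 := by
    obtain ⟨x, hx⟩ := hne
    intro h
    apply hx
    have := habs_eval x
    rw [h] at this
    simpa using this.symm
  have hlead : P.leadingCoeff ≠ 0 := Polynomial.leadingCoeff_ne_zero.mpr hP0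
  have hfact : ∀ z : ℂ, P.eval z
      = P.leadingCoeff * ((P.roots.map fun a => z - a)).prod := by
    intro z
    conv_lhs => rw [← Polynomial.C_leadingCoeff_mul_prod_multiset_X_sub_C (p := P) IsAlgClosed.card_roots_eq_natDegree]
    rw [Polynomial.eval_mul, Polynomial.eval_C, Polynomial.eval_multiset_prod,
      Multiset.map_map]
    simp
  -- the exceptional set
  set Z : Set ℝ := {x : ℝ | P.eval (Complex.exp (Complex.I * x)) = 0} with hZdef
  have hZc : Set.Countable Z := by
    have hsub : Z ⊆ ⋃ r ∈ P.roots.toFinset, {x : ℝ | Complex.exp (Complex.I * x) = r} := by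
      intro x hx
      have hroot : Complex.exp (Complex.I * x) ∈ P.roots := by
        rw [Polynomial.mem_roots hP0]
        exact hx
      exact Set.mem_biUnion (Multiset.mem_toFinset.mpr hroot) rfl
    exact (Set.Countable.biUnion (P.roots.toFinset.countable_toSet)
      fun r _ => countable_exp_fiber r).mono hsub
  have hZ0 : volume Z = 0 := hZc.measure_zero _
  -- the integrable representative
  set F : ℝ → ℝ := fun x => Real.log ‖P.leadingCoeff‖ +
    ((P.roots.map (fun a => Real.log (‖Complex.exp (Complex.I * x) - a‖))).sum)
    with hFdef
  have hFint : IntegrableOn F (Icc (-π) π) := by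
    have hpi : -π ≤ π := by linarith [pi_pos]
    rw [← intervalIntegrable_iff_integrableOn_Icc_of_le hpi]
    exact intervalIntegrable_const.add (II_sum_multiset P.roots)
  have hFeq : ∀ x : ℝ, x ∉ Z → Real.log (t x) = F x := by
    intro x hx
    have hx' : P.eval (Complex.exp (Complex.I * x)) ≠ 0 := hx
    have hfac_ne : ∀ a ∈ P.roots, Complex.exp (Complex.I * x) - a ≠ 0 := by
      intro a ha h0
      apply hx'
      have : Complex.exp (Complex.I * x) = a := sub_eq_zero.mp h0
      rw [this]
      exact (Polynomial.isRoot_of_mem_roots ha)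
    rw [← habs_eval x, hfact, norm_mul]
    have habsprod : ‖((P.roots.map fun a => Complex.exp (Complex.I * x) - a)).prod‖
        = ((P.roots.map fun a => ‖Complex.exp (Complex.I * x) - a‖)).prod := by
      have := map_multiset_prod (normHom : ℂ →*₀ ℝ) (P.roots.map fun a => Complex.exp (Complex.I * x) - a)
      rw [Multiset.map_map] at this
      exact this
    rw [habsprod,
      Real.log_mul (norm_ne_zero_iff.mpr hlead) ?hprodne,
      log_multiset_prod _ ?hall, Multiset.map_map]
    · rfl
    case hprodne =>
      apply Multiset.prod_ne_zero
      intro h0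
      obtain ⟨a, ha, ha0⟩ := Multiset.mem_map.mp h0
      exact norm_ne_zero_iff.mpr (hfac_ne a ha) ha0
    case hall =>
      intro b hb
      obtain ⟨a, ha, rfl⟩ := Multiset.mem_map.mp hb
      exact norm_ne_zero_iff.mpr (hfac_ne a ha)
  have h1 : ∀ᵐ x ∂volume, x ∉ Z := measure_eq_zero_iff_ae_notMem.mp hZ0
  have h2 : ∀ᵐ x ∂(volume.restrict (Icc (-π) π)), x ∉ Z :=
    Filter.Eventually.filter_mono (ae_mono Measure.restrict_le_self) h1
  refine Integrable.congr hFint ?_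
  filter_upwards [h2] with x hx
  exact (hFeq x hx).symm
end

section
/- For the Pollaczek–Szegő function f_a(λ) = e^{(2λ−π)φ(λ)}/cosh(πφ(λ)) for 0 ≤ λ ≤ π (extended evenly), with φ(λ) = (a/2)cot λ and a > 0, one has f_a(λ) ~ 2e^a·exp(−aπ/|λ|) as λ → 0. -/
open Real Filter Set

/-- The Pollaczek–Szegő spectral density `f_a`, defined for `0 ≤ λ ≤ π` by
`f_a(λ) = e^{(2λ-π)φ(λ)}/cosh(πφ(λ))` with `φ(λ) = (a/2)·cot λ`, and extended
evenly: `f_a(-λ) = f_a(λ)`. -/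
noncomputable def pollaczekSzego (a : ℝ) (x : ℝ) : ℝ :=
  Real.exp ((2 * |x| - π) * (a / 2 * (Real.cos |x| / Real.sin |x|))) /
    Real.cosh (π * (a / 2 * (Real.cos |x| / Real.sin |x|)))

private lemma sin_div_self_lim :
    Tendsto (fun t : ℝ => Real.sin t / t) (nhdsWithin 0 (Ioi 0)) (nhds 1) := by
  have h := Real.hasDerivAt_sin 0
  rw [hasDerivAt_iff_tendsto_slope] at h
  have h2 := h.mono_left (nhdsWithin_mono 0 (fun x hx => ne_of_gt hx : Ioi (0:ℝ) ⊆ {(0:ℝ)}ᶜ))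
  simp only [Real.cos_zero] at h2
  refine h2.congr fun t => ?_
  simp [slope_def_field, div_eq_div_iff]

private lemma key_pos (a : ℝ) (ha : 0 < a) :
    Tendsto (fun t : ℝ => Real.exp ((2 * t - π) * (a / 2 * (Real.cos t / Real.sin t))) /
      Real.cosh (π * (a / 2 * (Real.cos t / Real.sin t))) /
      (2 * Real.exp a * Real.exp (-(a * π) / t)))
    (nhdsWithin 0 (Ioi 0)) (nhds 1) := by
  set l : Filter ℝ := nhdsWithin 0 (Ioi 0) with hl
  have hIoo : Ioo (0:ℝ) 1 ∈ l := Ioo_mem_nhdsGT one_pos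
  -- t / sin t → 1
  have hts : Tendsto (fun t : ℝ => t / Real.sin t) l (nhds 1) := by
    have := (sin_div_self_lim.inv₀ one_ne_zero)
    simp only [inv_one] at this
    refine this.congr fun t => ?_
    rw [inv_div]
  -- cos t → 1
  have hcos : Tendsto (fun t : ℝ => Real.cos t) l (nhds 1) := by
    have := (Real.continuous_cos.tendsto 0).mono_left (nhdsWithin_le_nhds (s := Ioi (0:ℝ)))
    simpa using this
  -- Q : t cos t / sin t → 1
  have hQ : Tendsto (fun t : ℝ => t * Real.cos t / Real.sin t) l (nhds 1) := by
    have := hts.mul hcos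
    simp only [one_mul] at this
    refine this.congr fun t => ?_
    ring
  -- sin t → 0 within Ioi 0
  have hsin0 : Tendsto Real.sin l (nhdsWithin 0 (Ioi 0)) := by
    rw [tendsto_nhdsWithin_iff]
    constructor
    · have := (Real.continuous_sin.tendsto 0).mono_left (nhdsWithin_le_nhds (s := Ioi (0:ℝ)))
      simpa using this
    · filter_upwards [hIoo] with t ht
      exact Real.sin_pos_of_pos_of_lt_pi ht.1 (lt_trans ht.2 (by linarith [Real.pi_gt_three]))
  -- cos t / sin t → atTop
  have hC : Tendsto (fun t : ℝ => Real.cos t / Real.sin t) l atTop := by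
    have hinv : Tendsto (fun t : ℝ => (Real.sin t)⁻¹) l atTop :=
      tendsto_inv_nhdsGT_zero.comp hsin0
    have := Filter.Tendsto.pos_mul_atTop one_pos hcos hinv
    refine this.congr fun t => ?_
    rw [div_eq_mul_inv]
  -- D : exp(-(a*π) * (cos t / sin t)) → 0
  have hD : Tendsto (fun t : ℝ => Real.exp (-(a * π) * (Real.cos t / Real.sin t))) l (nhds 0) := by
    have h1 : Tendsto (fun t : ℝ => (a * π) * (Real.cos t / Real.sin t)) l atTop :=
      hC.const_mul_atTop (by positivity)
    have h2 := (Real.tendsto_exp_atTop.comp h1).inv_tendsto_atTop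
    refine h2.congr fun t => ?_
    simp [Real.exp_neg, Function.comp]
  -- B : (sin t - t cos t) / (t * sin t) → 0
  have hB : Tendsto (fun t : ℝ => (Real.sin t - t * Real.cos t) / (t * Real.sin t)) l (nhds 0) := by
    apply squeeze_zero_norm' (a := fun t : ℝ => t)
    · filter_upwards [hIoo] with t ht
      obtain ⟨ht0, ht1⟩ := ht
      have hs : 0 < Real.sin t :=
        Real.sin_pos_of_pos_of_lt_pi ht0 (lt_trans ht1 (by linarith [Real.pi_gt_three]))
      have hsl : t - t ^ 3 / 4 < Real.sin t := by nlinarith [Real.sin_gt_sub_cube ht0, pow_pos ht0 3]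
      have hsu : Real.sin t ≤ t := Real.sin_le ht0.le
      have hcl : 1 - t ^ 2 / 2 ≤ Real.cos t := Real.one_sub_sq_div_two_le_cos
      have hcu : Real.cos t ≤ 1 := Real.cos_le_one t
      have hnum_u : Real.sin t - t * Real.cos t ≤ t ^ 3 / 2 := by nlinarith
      have hnum_l : -(t ^ 3 / 2) ≤ Real.sin t - t * Real.cos t := by nlinarith
      have hden : 0 < t * Real.sin t := mul_pos ht0 hs
      have hsl' : t * (3 / 4) ≤ Real.sin t := by nlinarith
      rw [Real.norm_eq_abs, abs_div, abs_of_pos hden, div_le_iff₀ hden, abs_le]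
      constructor <;> nlinarith
    · exact tendsto_nhdsWithin_of_tendsto_nhds (by simpa using (continuous_id'.tendsto (0:ℝ)))
  -- X → 0
  have hX : Tendsto (fun t : ℝ => a * (t * Real.cos t / Real.sin t - 1) +
      a * π * ((Real.sin t - t * Real.cos t) / (t * Real.sin t))) l (nhds 0) := by
    have h1 : Tendsto (fun t : ℝ => a * (t * Real.cos t / Real.sin t - 1)) l (nhds 0) := by
      have := ((hQ.sub_const 1).const_mul a)
      simpa using this
    have h2 : Tendsto (fun t : ℝ => a * π *
        ((Real.sin t - t * Real.cos t) / (t * Real.sin t))) l (nhds 0) := by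
      have := hB.const_mul (a * π)
      simpa using this
    simpa using h1.add h2
  -- G → 1
  have hG : Tendsto (fun t : ℝ =>
      Real.exp (a * (t * Real.cos t / Real.sin t - 1) +
        a * π * ((Real.sin t - t * Real.cos t) / (t * Real.sin t))) /
      (1 + Real.exp (-(a * π) * (Real.cos t / Real.sin t)))) l (nhds 1) := by
    have h1 : Tendsto (fun t : ℝ =>
        Real.exp (a * (t * Real.cos t / Real.sin t - 1) +
          a * π * ((Real.sin t - t * Real.cos t) / (t * Real.sin t)))) l (nhds 1) := by
      have := (Real.continuous_exp.tendsto 0).comp hX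
      simpa [Function.comp_def] using this
    have h2 : Tendsto (fun t : ℝ =>
        1 + Real.exp (-(a * π) * (Real.cos t / Real.sin t))) l (nhds 1) := by
      have := hD.const_add 1
      simpa using this
    have := h1.div h2 one_ne_zero
    rw [div_one] at this
    exact this
  refine hG.congr' ?_
  filter_upwards [hIoo] with t ht
  obtain ⟨ht0, ht1⟩ := ht
  have hs : 0 < Real.sin t :=
    Real.sin_pos_of_pos_of_lt_pi ht0 (lt_trans ht1 (by linarith [Real.pi_gt_three]))
  set c : ℝ := a / 2 * (Real.cos t / Real.sin t) with hc
  have e1 : Real.exp (-(π * c)) = Real.exp (π * c) *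
      Real.exp (-(a * π) * (Real.cos t / Real.sin t)) := by
    rw [← Real.exp_add]
    congr 1
    rw [hc]
    ring
  have e2 : Real.exp ((2 * t - π) * c) =
      Real.exp (a * (t * Real.cos t / Real.sin t - 1) +
        a * π * ((Real.sin t - t * Real.cos t) / (t * Real.sin t))) *
      (Real.exp (π * c) * (Real.exp a * Real.exp (-(a * π) / t))) := by
    rw [← Real.exp_add, ← Real.exp_add, ← Real.exp_add]
    congr 1
    rw [hc]
    field_simp
    ring
  have hd : 0 < 1 + Real.exp (-(a * π) * (Real.cos t / Real.sin t)) := by positivity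
  rw [Real.cosh_eq, e1, e2]
  field_simp

theorem pollaczekSzego_asymptotic_at_zero (a : ℝ) (ha : 0 < a) :
    Tendsto (fun x =>
        pollaczekSzego a x / (2 * Real.exp a * Real.exp (-(a * π) / |x|)))
      (nhdsWithin 0 {x : ℝ | x ≠ 0}) (nhds 1) := by
  have habs : Tendsto (fun x : ℝ => |x|) (nhdsWithin 0 {x : ℝ | x ≠ 0})
      (nhdsWithin 0 (Ioi 0)) := by
    rw [tendsto_nhdsWithin_iff]
    constructor
    · have := (continuous_abs.tendsto (0:ℝ)).mono_left
        (nhdsWithin_le_nhds (s := {x : ℝ | x ≠ 0}))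
      simpa using this
    · filter_upwards [self_mem_nhdsWithin] with x hx
      exact abs_pos.mpr hx
  have := (key_pos a ha).comp habs
  refine this.congr fun x => ?_
  simp [pollaczekSzego, Function.comp]
end
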